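/- Let N be a nilpotent normal subgroup of the finite group G and let u be a torsion element of V(ℤG,N). Then Σ_{n^N} [C_G(n) : C_N(n)]·ε_n(u) = [G:N], where the sum runs over a set of representatives n of the conjugacy classes of N, C_G(n) is the centralizer of n in G, and C_N(n) = C_G(n) ∩ N. -/

import Mathlib

open Finset

open Classical in
/-- Partial augmentation `ε_g(u)`: sum of the coefficients of `u` over the conjugacy
class of `g` in `G`. -/
noncomputable def partialAug {G : Type*} [Group G] [Fintype G]
    (u : MonoidAlgebra ℤ G) (g : G) : ℤ :=
  ∑ x ∈ Finset.univ.filter (fun x => IsConj g x), u.coeff x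

/-- The augmentation (sum of coefficients) of `u` equals 1. -/
def AugOne {G : Type*} [Group G] [Fintype G] (u : MonoidAlgebra ℤ G) : Prop :=
  ∑ g : G, u.coeff g = 1

/-- `u` is mapped to `1` by the ring homomorphism `ℤG → ℤ(G/N)` induced by `G → G/N`. -/
def MapsToOneMod {G : Type*} [Group G] (N : Subgroup G) [N.Normal]
    (u : MonoidAlgebra ℤ G) : Prop :=
  MonoidAlgebra.mapDomainRingHom ℤ (QuotientGroup.mk' N) u = 1

/-- The conjugation map from `N` to the `N`-conjugacy class of `n`. -/
def classMap {G : Type*} [Group G] (N : Subgroup G) (n : G) (c : ↥N) :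
    {y : G // ∃ c ∈ N, c * n * c⁻¹ = y} :=
  ⟨(c : G) * n * (c : G)⁻¹, ⟨(c : G), c.2, rfl⟩⟩

/-- The left cosets of the centralizer of `n` in `N` biject with the `N`-conjugacy
class of `n`. -/
noncomputable def classEquiv {G : Type*} [Group G] (N : Subgroup G) (n : G) :
    (↥N ⧸ ((Subgroup.centralizer {n}).subgroupOf N)) ≃
      {y : G // ∃ c ∈ N, c * n * c⁻¹ = y} := by
  refine Equiv.ofBijective
    (fun q => Quotient.liftOn' q (classMap N n) (fun c d h => ?_)) ⟨?_, ?_⟩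
  · rw [QuotientGroup.leftRel_apply, Subgroup.mem_subgroupOf,
      Subgroup.mem_centralizer_singleton_iff] at h
    have h' : n * ((c:G)⁻¹ * (d:G)) = ((c:G)⁻¹ * (d:G)) * n := by
      push_cast at h
      simp only [mul_assoc] at h ⊢
      first
        | exact h
        | exact h.symm
    simp only [classMap, Subtype.mk.injEq]
    calc (c:G) * n * (c:G)⁻¹
        = (c:G) * (n * ((c:G)⁻¹ * (d:G))) * (d:G)⁻¹ := by group
      _ = (c:G) * (((c:G)⁻¹ * (d:G)) * n) * (d:G)⁻¹ := by rw [h']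
      _ = (d:G) * n * (d:G)⁻¹ := by group
  · intro q₁ q₂
    induction q₁ using Quotient.inductionOn'
    induction q₂ using Quotient.inductionOn'
    rename_i c d
    intro h
    simp only [Quotient.liftOn'_mk'', classMap, Subtype.mk.injEq] at h
    apply Quotient.sound'
    rw [QuotientGroup.leftRel_apply, Subgroup.mem_subgroupOf,
      Subgroup.mem_centralizer_singleton_iff]
    have key : n * ((c:G)⁻¹ * (d:G)) = ((c:G)⁻¹ * (d:G)) * n :=
      calc n * ((c:G)⁻¹ * (d:G))
          = (c:G)⁻¹ * ((c:G) * n * (c:G)⁻¹) * (d:G) := by group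
        _ = (c:G)⁻¹ * ((d:G) * n * (d:G)⁻¹) * (d:G) := by rw [h]
        _ = ((c:G)⁻¹ * (d:G)) * n := by group
    push_cast
    simp only [mul_assoc] at key ⊢
    first
      | exact key
      | exact key.symm
  · rintro ⟨y, c, hc, rfl⟩
    exact ⟨Quotient.mk'' ⟨c, hc⟩, rfl⟩

open Classical in
lemma card_nclass {G : Type*} [Group G] [Fintype G] (N : Subgroup G) (n : G) :
    (univ.filter (fun y => ∃ c ∈ N, c * n * c⁻¹ = y)).card
      = (Subgroup.centralizer {n}).relIndex N := by
  have h := Nat.card_congr (classEquiv N n)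
  rw [Nat.card_eq_fintype_card, Nat.card_eq_fintype_card, Fintype.card_subtype] at h
  rw [Subgroup.relIndex, Subgroup.index_eq_card, Nat.card_eq_fintype_card, h]

open Classical in
lemma card_gclass {G : Type*} [Group G] [Fintype G] (n : G) :
    (univ.filter (fun y => IsConj n y)).card = (Subgroup.centralizer {n}).index := by
  rw [← Subgroup.relIndex_top_right, ← card_nclass ⊤ n]
  congr 1
  ext y
  simp [isConj_iff]

lemma index_key {G : Type*} [Group G] [Fintype G] (N : Subgroup G) (n : G) :
    N.relIndex (Subgroup.centralizer {n}) * (Subgroup.centralizer {n}).index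
      = (Subgroup.centralizer {n}).relIndex N * N.index := by
  set C := Subgroup.centralizer {n}
  rw [← Subgroup.inf_relIndex_right N C, Subgroup.relIndex_mul_index inf_le_right,
    ← Subgroup.inf_relIndex_right C N, Subgroup.relIndex_mul_index inf_le_right,
    inf_comm]

/-- Equation (5) of the paper: if `N` is a nilpotent normal subgroup of the finite
group `G` and `u` is a torsion element of `V(ℤG, N)`, then
`∑_{n^N} [C_G(n) : C_N(n)] · ε_n(u) = [G : N]`, the sum running over a set `R` of
representatives of the conjugacy classes of `N`. -/
theorem cliffWeiss_index_sum {G : Type*} [Group G] [Fintype G]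
    (N : Subgroup G) [N.Normal] (hNnil : Group.IsNilpotent ↥N)
    (u : (MonoidAlgebra ℤ G)ˣ) (hu : IsOfFinOrder u)
    (hu1 : AugOne (u : MonoidAlgebra ℤ G))
    (huN : MapsToOneMod N (u : MonoidAlgebra ℤ G))
    (R : Finset G) (hRN : ∀ r ∈ R, r ∈ N)
    (hR : ∀ g ∈ N, ∃! r, r ∈ R ∧ ∃ c ∈ N, c * g * c⁻¹ = r) :
    ∑ n ∈ R, (N.relIndex (Subgroup.centralizer {n}) : ℤ) * partialAug (↑u) n
      = (N.index : ℤ) := by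
  classical
  -- Step 1: the coefficients of u over N sum to 1.
  have hNsum : ∑ y ∈ univ.filter (fun y => y ∈ N), (u : MonoidAlgebra ℤ G).coeff y = 1 := by
    have h := congrArg (fun v : MonoidAlgebra ℤ (G ⧸ N) => v.coeff (1 : G ⧸ N)) huN
    simp only [MonoidAlgebra.mapDomainRingHom_apply] at h
    simp only [MonoidAlgebra.mapDomainRingHom_apply, MonoidAlgebra.mapDomain,
      MonoidAlgebra.coeff_ofCoeff, Finsupp.mapDomain, Finsupp.sum, Finsupp.finset_sum_apply,
      Finsupp.single_apply, MonoidAlgebra.coeff_one_one] at h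
    rw [← h]
    rw [Finset.sum_filter]
    rw [← Finset.sum_subset (Finset.subset_univ ((u : MonoidAlgebra ℤ G).coeff.support))
      (by intro x _ hx
          simp only [Finsupp.notMem_support_iff] at hx
          simp [hx])]
    apply Finset.sum_congr rfl
    intro x _
    have : (QuotientGroup.mk' N) x = 1 ↔ x ∈ N := by
      simp [QuotientGroup.eq_one_iff]
    by_cases hx : x ∈ N <;> simp [hx, this]
  -- Step 2: the per-element class decomposition.
  have hdecomp : ∀ y ∈ N,
      (univ.filter (fun z => IsConj y z))
        = (R.filter (fun n => IsConj n y)).biUnion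
            (fun n => univ.filter (fun z => ∃ c ∈ N, c * n * c⁻¹ = z)) := by
    intro y hy
    ext z
    simp only [mem_filter, mem_univ, true_and, mem_biUnion]
    constructor
    · intro hz
      have hzN : z ∈ N := by
        obtain ⟨c, hc⟩ := isConj_iff.mp hz
        rw [← hc]
        exact Subgroup.Normal.conj_mem ‹N.Normal› y hy c
      obtain ⟨r, ⟨⟨hrR, c, hcN, hc⟩, -⟩⟩ := hR z hzN
      refine ⟨r, ⟨hrR, ?_⟩, c⁻¹, inv_mem hcN, ?_⟩
      · rw [← hc]
        have : IsConj z y := hz.symm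
        exact (isConj_iff.mpr ⟨c, rfl⟩).symm.trans this
      · rw [← hc]; group
    · rintro ⟨n, ⟨hnR, hny⟩, c, hcN, rfl⟩
      exact hny.symm.trans (isConj_iff.mpr ⟨c, rfl⟩)
  have hdisj : ∀ y ∈ N, ∀ n₁ ∈ R.filter (fun n => IsConj n y),
      ∀ n₂ ∈ R.filter (fun n => IsConj n y), n₁ ≠ n₂ →
      Disjoint (univ.filter (fun z => ∃ c ∈ N, c * n₁ * c⁻¹ = z))
        (univ.filter (fun z => ∃ c ∈ N, c * n₂ * c⁻¹ = z)) := by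
    intro y hy n₁ hn₁ n₂ hn₂ hne
    rw [Finset.disjoint_left]
    rintro z hz₁ hz₂
    simp only [mem_filter, mem_univ, true_and] at hz₁ hz₂
    obtain ⟨c₁, hc₁N, hc₁⟩ := hz₁
    obtain ⟨c₂, hc₂N, hc₂⟩ := hz₂
    have hn₁N : n₁ ∈ N := hRN n₁ (mem_filter.mp hn₁).1
    have hzN : z ∈ N := by
      rw [← hc₁]; exact Subgroup.mul_mem _ (Subgroup.mul_mem _ hc₁N hn₁N) (inv_mem hc₁N)
    obtain ⟨r, -, hun⟩ := hR z hzN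
    have e₁ : n₁ = r := hun n₁ ⟨(mem_filter.mp hn₁).1, c₁⁻¹, inv_mem hc₁N, by rw [← hc₁]; group⟩
    have e₂ : n₂ = r := hun n₂ ⟨(mem_filter.mp hn₂).1, c₂⁻¹, inv_mem hc₂N, by rw [← hc₂]; group⟩
    exact hne (e₁.trans e₂.symm)
  -- Step 3: for y ∈ N, the weighted count of representatives conjugate to y is [G:N].
  have hcount : ∀ y ∈ N,
      ∑ n ∈ R.filter (fun n => IsConj n y), N.relIndex (Subgroup.centralizer {n})
        = N.index := by
    intro y hy
    have hcardpos : 0 < (univ.filter (fun z => IsConj y z)).card :=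
      Finset.card_pos.mpr ⟨y, mem_filter.mpr ⟨mem_univ y, IsConj.refl y⟩⟩
    apply Nat.eq_of_mul_eq_mul_right hcardpos
    have hsplit : (univ.filter (fun z => IsConj y z)).card
        = ∑ n ∈ R.filter (fun n => IsConj n y),
            (univ.filter (fun z => ∃ c ∈ N, c * n * c⁻¹ = z)).card := by
      rw [hdecomp y hy, Finset.card_biUnion (hdisj y hy)]
    rw [Finset.sum_mul]
    calc ∑ n ∈ R.filter (fun n => IsConj n y),
          N.relIndex (Subgroup.centralizer {n}) * (univ.filter (fun z => IsConj y z)).card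
        = ∑ n ∈ R.filter (fun n => IsConj n y),
            (Subgroup.centralizer {n}).relIndex N * N.index := by
          apply Finset.sum_congr rfl
          intro n hn
          have hny : IsConj n y := (mem_filter.mp hn).2
          have : (univ.filter (fun z => IsConj y z)) = (univ.filter (fun z => IsConj n z)) := by
            ext z; simp only [mem_filter, mem_univ, true_and]
            exact ⟨fun h => hny.trans h, fun h => hny.symm.trans h⟩
          rw [this, card_gclass, index_key]
      _ = (∑ n ∈ R.filter (fun n => IsConj n y),
            (Subgroup.centralizer {n}).relIndex N) * N.index := by rw [Finset.sum_mul]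
      _ = N.index * (univ.filter (fun z => IsConj y z)).card := by
          rw [hsplit, Finset.mul_sum, Finset.sum_mul]
          apply Finset.sum_congr rfl
          intro n _
          rw [card_nclass, mul_comm]
  -- Step 4: put everything together.
  have hmain : ∑ n ∈ R, (N.relIndex (Subgroup.centralizer {n}) : ℤ) * partialAug (↑u) n
      = ∑ y : G, (∑ n ∈ R.filter (fun n => IsConj n y),
          (N.relIndex (Subgroup.centralizer {n}) : ℤ)) * (u : MonoidAlgebra ℤ G).coeff y := by
    simp only [partialAug, Finset.mul_sum, Finset.sum_filter, Finset.sum_mul]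
    rw [Finset.sum_comm]
    apply Finset.sum_congr rfl
    intro y _
    apply Finset.sum_congr rfl
    intro n _
    by_cases h : IsConj n y <;> simp [h]
  rw [hmain]
  have : ∀ y : G, (∑ n ∈ R.filter (fun n => IsConj n y),
      (N.relIndex (Subgroup.centralizer {n}) : ℤ))
      = if y ∈ N then (N.index : ℤ) else 0 := by
    intro y
    by_cases hy : y ∈ N
    · rw [if_pos hy, ← hcount y hy]
      push_cast
      try rfl
    · rw [if_neg hy]
      convert Finset.sum_empty
      rw [Finset.filter_eq_empty_iff]
      intro n hn hc
      exact hy (by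
        obtain ⟨c, hc'⟩ := isConj_iff.mp hc
        rw [← hc']
        exact Subgroup.Normal.conj_mem ‹N.Normal› n (hRN n hn) c)
  calc ∑ y : G, (∑ n ∈ R.filter (fun n => IsConj n y),
          (N.relIndex (Subgroup.centralizer {n}) : ℤ)) * (u : MonoidAlgebra ℤ G).coeff y
      = ∑ y : G, (if y ∈ N then (N.index : ℤ) else 0) * (u : MonoidAlgebra ℤ G).coeff y := by
        apply Finset.sum_congr rfl; intro y _; rw [this y]
    _ = ∑ y ∈ univ.filter (fun y => y ∈ N), (N.index : ℤ) * (u : MonoidAlgebra ℤ G).coeff y := by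
        rw [Finset.sum_filter]
        apply Finset.sum_congr rfl
        intro y _
        by_cases hy : y ∈ N <;> simp [hy]
    _ = (N.index : ℤ) * ∑ y ∈ univ.filter (fun y => y ∈ N), (u : MonoidAlgebra ℤ G).coeff y := by
        rw [Finset.mul_sum]
    _ = (N.index : ℤ) := by rw [hNsum, mul_one]
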